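/- Construction B: let l ∈ {0,1,2} and S₁, S₂ ⊆ F₂ ⊕ F₄^m be disjoint sets such that wt(y+z) is odd for y ∈ S₁, z ∈ S₂, and wt(y+z) is even for y, z in the same S_i. Define S̃₁ = {[y,0] : y ∈ S₁} ∪ {[y,ω^l] : y ∈ S₂} and S̃₂ = {[y,0] : y ∈ S₂} ∪ {[y,ω^l] : y ∈ S₁} in F₂ ⊕ F₄^{m+1}. Then S̃₁, S̃₂ are disjoint, wt(y+z) is odd for y ∈ S̃₁, z ∈ S̃₂, and wt(y+z) is even for y,z in the same S̃_i. -/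
import Mathlib

def add4 : Fin 4 → Fin 4 → Fin 4 :=
  ![![0, 1, 2, 3], ![1, 0, 3, 2], ![2, 3, 0, 1], ![3, 2, 1, 0]]

def addV {m : ℕ} (p q : ZMod 2 × (Fin m → Fin 4)) : ZMod 2 × (Fin m → Fin 4) :=
  (p.1 + q.1, fun k => add4 (p.2 k) (q.2 k))

def wtV {m : ℕ} (p : ZMod 2 × (Fin m → Fin 4)) : ℕ :=
  (if p.1 ≠ 0 then 1 else 0) + (Finset.univ.filter fun k => p.2 k ≠ 0).card

def app {m : ℕ} (y : ZMod 2 × (Fin m → Fin 4)) (ξ : Fin 4) :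
    ZMod 2 × (Fin (m + 1) → Fin 4) :=
  (y.1, Fin.snoc y.2 ξ)

lemma addV_app {m : ℕ} (y z : ZMod 2 × (Fin m → Fin 4)) (a b : Fin 4) :
    addV (app y a) (app z b) = app (addV y z) (add4 a b) := by
  unfold addV app
  refine Prod.ext rfl ?_
  funext k
  refine Fin.lastCases ?_ (fun i => ?_) k <;> simp

lemma wtV_app {m : ℕ} (y : ZMod 2 × (Fin m → Fin 4)) (a : Fin 4) :
    wtV (app y a) = wtV y + (if a ≠ 0 then 1 else 0) := by
  unfold wtV app
  have : ∀ (n : ℕ) (f : Fin n → Fin 4),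
      (Finset.univ.filter fun k => f k ≠ 0).card = ∑ k, (if f k ≠ 0 then 1 else 0) := by
    intro n f
    rw [Finset.card_filter]
  simp only [this]
  rw [Fin.sum_univ_castSucc]
  simp [Nat.add_assoc]

lemma addV_comm {m : ℕ} (y z : ZMod 2 × (Fin m → Fin 4)) : addV y z = addV z y := by
  unfold addV
  refine Prod.ext (add_comm _ _) ?_
  funext k
  have : ∀ a b : Fin 4, add4 a b = add4 b a := by decide
  exact this _ _

lemma app_inj {m : ℕ} {y z : ZMod 2 × (Fin m → Fin 4)} {a b : Fin 4}
    (h : app y a = app z b) : y = z ∧ a = b := by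
  unfold app at h
  have h1 := congrArg Prod.fst h
  have h2 := congrArg Prod.snd h
  simp only at h1 h2
  constructor
  · refine Prod.ext h1 ?_
    funext i
    have := congrFun h2 (Fin.castSucc i)
    simpa using this
  · have := congrFun h2 (Fin.last m)
    simpa using this

/-- Construction B: S̃₁ = {[y,0] : y ∈ S₁} ∪ {[y,ω^l] : y ∈ S₂},
S̃₂ = {[y,0] : y ∈ S₂} ∪ {[y,ω^l] : y ∈ S₁}, where ω^l is a nonzero ξ ∈ F₄. -/
theorem constructionB (m : ℕ) (ξ : Fin 4) (hξ : ξ ≠ 0)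
    (S₁ S₂ : Set (ZMod 2 × (Fin m → Fin 4)))
    (hdisj : Disjoint S₁ S₂)
    (hodd : ∀ y ∈ S₁, ∀ z ∈ S₂, Odd (wtV (addV y z)))
    (heven₁ : ∀ y ∈ S₁, ∀ z ∈ S₁, Even (wtV (addV y z)))
    (heven₂ : ∀ y ∈ S₂, ∀ z ∈ S₂, Even (wtV (addV y z))) :
    let T₁ : Set (ZMod 2 × (Fin (m + 1) → Fin 4)) :=
      (fun y => app y 0) '' S₁ ∪ (fun y => app y ξ) '' S₂
    let T₂ : Set (ZMod 2 × (Fin (m + 1) → Fin 4)) :=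
      (fun y => app y 0) '' S₂ ∪ (fun y => app y ξ) '' S₁
    Disjoint T₁ T₂ ∧
    (∀ y ∈ T₁, ∀ z ∈ T₂, Odd (wtV (addV y z))) ∧
    (∀ y ∈ T₁, ∀ z ∈ T₁, Even (wtV (addV y z))) ∧
    (∀ y ∈ T₂, ∀ z ∈ T₂, Even (wtV (addV y z))) := by
  intro T₁ T₂
  have hadd00 : add4 0 0 = 0 := by decide
  have haddξξ : add4 ξ ξ = 0 := by revert hξ; revert ξ; decide
  have hadd0ξ : add4 0 ξ ≠ 0 := by revert hξ; revert ξ; decide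
  have haddξ0 : add4 ξ 0 ≠ 0 := by revert hξ; revert ξ; decide
  have wt0 : ∀ (y z : ZMod 2 × (Fin m → Fin 4)) (a b : Fin 4), add4 a b = 0 →
      wtV (addV (app y a) (app z b)) = wtV (addV y z) := by
    intro y z a b h
    rw [addV_app, wtV_app, h]
    simp
  have wt1 : ∀ (y z : ZMod 2 × (Fin m → Fin 4)) (a b : Fin 4), add4 a b ≠ 0 →
      wtV (addV (app y a) (app z b)) = wtV (addV y z) + 1 := by
    intro y z a b h
    rw [addV_app, wtV_app, if_pos h]
  refine ⟨?_, ?_, ?_, ?_⟩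
  · rw [Set.disjoint_left]
    rintro x (⟨y, hy, rfl⟩ | ⟨y, hy, rfl⟩) (⟨z, hz, h⟩ | ⟨z, hz, h⟩)
    · obtain ⟨rfl, -⟩ := app_inj h.symm
      exact Set.disjoint_left.mp hdisj hy hz
    · exact hξ (app_inj h).2
    · exact hξ (app_inj h.symm).2
    · obtain ⟨rfl, -⟩ := app_inj h.symm
      exact Set.disjoint_left.mp hdisj hz hy
  · rintro _ (⟨y, hy, rfl⟩ | ⟨y, hy, rfl⟩) _ (⟨z, hz, rfl⟩ | ⟨z, hz, rfl⟩)
    · rw [wt0 _ _ _ _ hadd00]; exact hodd y hy z hz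
    · rw [wt1 _ _ _ _ hadd0ξ]; exact (heven₁ y hy z hz).add_one
    · rw [wt1 _ _ _ _ haddξ0]; exact (heven₂ y hy z hz).add_one
    · rw [wt0 _ _ _ _ haddξξ]; exact addV_comm z y ▸ hodd z hz y hy
  · rintro _ (⟨y, hy, rfl⟩ | ⟨y, hy, rfl⟩) _ (⟨z, hz, rfl⟩ | ⟨z, hz, rfl⟩)
    · rw [wt0 _ _ _ _ hadd00]; exact heven₁ y hy z hz
    · rw [wt1 _ _ _ _ hadd0ξ]; exact (hodd y hy z hz).add_one
    · rw [wt1 _ _ _ _ haddξ0]; exact (addV_comm z y ▸ hodd z hz y hy).add_one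
    · rw [wt0 _ _ _ _ haddξξ]; exact heven₂ y hy z hz
  · rintro _ (⟨y, hy, rfl⟩ | ⟨y, hy, rfl⟩) _ (⟨z, hz, rfl⟩ | ⟨z, hz, rfl⟩)
    · rw [wt0 _ _ _ _ hadd00]; exact heven₂ y hy z hz
    · rw [wt1 _ _ _ _ hadd0ξ]; exact (addV_comm z y ▸ hodd z hz y hy).add_one
    · rw [wt1 _ _ _ _ haddξ0]; exact (hodd y hy z hz).add_one
    · rw [wt0 _ _ _ _ haddξξ]; exact heven₁ y hy z hz
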